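/- Let k ∈ {2, 3}, a > 0, c ≠ 0, σ ≤ μ, σ < −μ, δ ∈ (0, |a/c|), and fix û ∈ [−δ, −μδ/σ]. Define I(ρ) = û e^{μρ} + σ ∫_{−ρ}^{0} e^{−μθ} η_{(k)}(θ) dθ for ρ > 0, so that I'(ρ) = e^{μρ}[μ û + σ η_{(k)}(−ρ)]. Then: (A) if μ ≤ 0, I'(ρ) > 0; (B) if μ > 0 and η_{(k)}(−ρ) ≤ 0, I'(ρ) > 0; (C) if I'(ρ) ≤ 0, then μ > 0, η_{(k)}(−ρ) > 0, and I(ρ) < δ. -/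

import Mathlib

/-- The constant `D₁ = (|μ|+|σ|)(1 + (|μ|+|σ|)|c|δ)`. -/
noncomputable def D1 (μ σ c δ : ℝ) : ℝ := (|μ| + |σ|) * (1 + (|μ| + |σ|) * |c| * δ)

/-- The constant `D₂ = (D₁² + (|μ|+|σ|)³|c|δ)(1 + |σc|δ)`. -/
noncomputable def D2 (μ σ c δ : ℝ) : ℝ :=
  ((D1 μ σ c δ) ^ 2 + (|μ| + |σ|) ^ 3 * |c| * δ) * (1 + |σ * c| * δ)

/-- The profile `η̄` used to define `η_{(3)}`. -/
noncomputable def etabar (δ d1 d2 s : ℝ) : ℝ :=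
  if s ≤ 0 then -δ
  else if s < d1 / d2 then -δ + δ * d2 / 2 * s ^ 2
  else -δ - δ * d1 ^ 2 / (2 * d2) + δ * d1 * s

/-- The shift `θ_shift` used to define `η_{(3)}`. -/
noncomputable def thetaShift (δ d1 d2 uh : ℝ) : ℝ :=
  if uh ≤ -δ + δ * d1 ^ 2 / (2 * d2) then Real.sqrt (2 * (uh + δ) / (d2 * δ))
  else (uh + δ + δ * d1 ^ 2 / (2 * d2)) / (d1 * δ)

/-- The extremal forcing functions `η_{(k)}` for `k = 1, 2, 3`. -/
noncomputable def etaK (μ σ c δ uh : ℝ) : ℕ → ℝ → ℝ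
  | 1, θ => if θ < 0 then -δ else uh
  | 2, θ => max (uh + D1 μ σ c δ * δ * θ) (-δ)
  | 3, θ => etabar δ (D1 μ σ c δ) (D2 μ σ c δ)
      (θ + thetaShift δ (D1 μ σ c δ) (D2 μ σ c δ) uh)
  | _, _ => 0

/-- `I(û, δ, ĉ, k) = û e^{μ(a+ĉδ)} + σ ∫_{-(a+ĉδ)}^{0} e^{-μθ} η_{(k)}(θ) dθ`
(the constants `D₁, D₂` in `η_{(k)}` are computed from `|c|`, while `ĉ` only enters
the integration limits). -/
noncomputable def Ifun (μ σ c a δ chat uh : ℝ) (k : ℕ) : ℝ :=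
  uh * Real.exp (μ * (a + chat * δ)) +
    σ * ∫ θ in (-(a + chat * δ))..(0 : ℝ), Real.exp (-μ * θ) * etaK μ σ c δ uh k θ

/-- `P(δ, c, k) = sup_{û ∈ [-δ, -μδ/σ]} I(û, δ, |c|, k)`. -/
noncomputable def Pfun (μ σ c a δ : ℝ) (k : ℕ) : ℝ :=
  sSup ((fun uh => Ifun μ σ c a δ |c| uh k) '' Set.Icc (-δ) (-μ * δ / σ))

/-- `r = a + |c|δ`. -/
noncomputable def rr (a c δ : ℝ) : ℝ := a + |c| * δ

/-- The explicit one-piece integral `I₁(û, δ)` (for `μ ≠ 0`). -/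
noncomputable def I1fun (μ σ c a δ uh : ℝ) : ℝ :=
  uh * (Real.exp (μ * rr a c δ) + σ / μ * (Real.exp (μ * rr a c δ) - 1)) +
    σ / μ * D1 μ σ c δ * δ *
      (1 / μ * (Real.exp (μ * rr a c δ) - 1) - rr a c δ * Real.exp (μ * rr a c δ))

/-- The explicit two-piece integral `I₂(û, δ)` (for `μ ≠ 0`). -/
noncomputable def I2fun (μ σ c a δ uh : ℝ) : ℝ :=
  uh * (Real.exp (μ * rr a c δ) - σ / μ) +
    σ / μ * δ * (D1 μ σ c δ / μ *
      (Real.exp (μ * (δ + uh) / (D1 μ σ c δ * δ)) - 1) - Real.exp (μ * rr a c δ))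

section helpers
variable {δ d1 d2 uh : ℝ}

lemma etabar_closed (hδ : 0 < δ) (h1 : 0 < d1) (h2 : 0 < d2) (s : ℝ) :
    etabar δ d1 d2 s =
      -δ + δ * d2 / 2 * (min (max s 0) (d1 / d2)) ^ 2 + δ * d1 * max (s - d1 / d2) 0 := by
  have hq : 0 < d1 / d2 := div_pos h1 h2
  unfold etabar
  split_ifs with hs hs'
  · rw [max_eq_right hs, min_eq_left hq.le, max_eq_right (by nlinarith)]
    ring
  · push_neg at hs
    rw [max_eq_left hs.le, min_eq_left hs'.le, max_eq_right (by linarith)]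
    ring
  · push_neg at hs hs'
    rw [max_eq_left hs.le, min_eq_right hs', max_eq_left (by linarith)]
    have : d2 ≠ 0 := ne_of_gt h2
    field_simp
    ring

lemma etabar_cont (hδ : 0 < δ) (h1 : 0 < d1) (h2 : 0 < d2) :
    Continuous (etabar δ d1 d2) := by
  have : etabar δ d1 d2 = fun s =>
      -δ + δ * d2 / 2 * (min (max s 0) (d1 / d2)) ^ 2 + δ * d1 * max (s - d1 / d2) 0 :=
    funext (etabar_closed hδ h1 h2)
  rw [this]; fun_prop

lemma etabar_lb (hδ : 0 < δ) (h1 : 0 < d1) (h2 : 0 < d2) (s : ℝ) :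
    -δ ≤ etabar δ d1 d2 s := by
  rw [etabar_closed hδ h1 h2]
  have a1 : (0:ℝ) ≤ δ * d2 / 2 * (min (max s 0) (d1 / d2)) ^ 2 := by positivity
  have a2 : (0:ℝ) ≤ δ * d1 * max (s - d1 / d2) 0 := by positivity
  linarith

lemma etabar_of_nonpos {s : ℝ} (hs : s ≤ 0) : etabar δ d1 d2 s = -δ := by
  simp [etabar, hs]

lemma etabar_mono (hδ : 0 < δ) (h1 : 0 < d1) (h2 : 0 < d2) :
    Monotone (etabar δ d1 d2) := by
  intro s t hst
  rw [etabar_closed hδ h1 h2, etabar_closed hδ h1 h2]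
  have hmax : max s 0 ≤ max t 0 := max_le_max hst le_rfl
  have hmin : min (max s 0) (d1/d2) ≤ min (max t 0) (d1/d2) := min_le_min hmax le_rfl
  have hnn : 0 ≤ min (max s 0) (d1/d2) := le_min (le_max_right _ _) (div_pos h1 h2).le
  have hsq : (min (max s 0) (d1/d2))^2 ≤ (min (max t 0) (d1/d2))^2 := by nlinarith
  have hm2 : max (s - d1/d2) 0 ≤ max (t - d1/d2) 0 := max_le_max (by linarith) le_rfl
  have c1 : (0:ℝ) ≤ δ * d2 / 2 := by positivity
  have c2 : (0:ℝ) ≤ δ * d1 := by positivity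
  nlinarith

lemma etabar_strict (hδ : 0 < δ) (h1 : 0 < d1) (h2 : 0 < d2)
    {s t : ℝ} (hs : 0 < s) (hst : s < t) : etabar δ d1 d2 s < etabar δ d1 d2 t := by
  have hq : 0 < d1 / d2 := div_pos h1 h2
  rw [etabar_closed hδ h1 h2, etabar_closed hδ h1 h2]
  rw [max_eq_left hs.le, max_eq_left (by linarith : (0:ℝ) ≤ t)]
  rcases lt_or_ge s (d1/d2) with h | h
  · rw [min_eq_left h.le]
    rcases lt_or_ge t (d1/d2) with h' | h'
    · rw [min_eq_left h'.le, max_eq_right (by linarith), max_eq_right (by linarith)]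
      have hsq : s^2 < t^2 := by nlinarith
      nlinarith [mul_pos hδ h2]
    · rw [min_eq_right h', max_eq_right (by linarith), max_eq_left (by linarith)]
      have e1 : δ*d2/2*(d1/d2)^2 = δ*d1^2/(2*d2) := by field_simp
      have e2 : δ*d1^2/d2 = 2*(δ*d1^2/(2*d2)) := by field_simp
      have hA : δ*d2/2*s^2 < δ*d1^2/(2*d2) := by
        rw [← e1]
        have hsq : s^2 < (d1/d2)^2 := by nlinarith
        nlinarith [mul_pos hδ h2]
      have hB : δ*d1*(d1/d2) ≤ δ*d1*t := by
        apply mul_le_mul_of_nonneg_left h' (by positivity)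
      have e3 : δ*d1*(d1/d2) = δ*d1^2/d2 := by ring
      linarith
  · have ht : d1/d2 ≤ t := by linarith
    rw [min_eq_right h, min_eq_right ht, max_eq_left (by linarith), max_eq_left (by linarith)]
    have : δ*d1*(s - d1/d2) < δ*d1*(t - d1/d2) :=
      mul_lt_mul_of_pos_left (by linarith) (by positivity)
    linarith

lemma etabar_thetaShift_le (hδ : 0 < δ) (h1 : 0 < d1) (h2 : 0 < d2)
    (hu : -δ ≤ uh) : etabar δ d1 d2 (thetaShift δ d1 d2 uh) ≤ uh := by
  have hq : 0 < d1 / d2 := div_pos h1 h2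
  unfold thetaShift
  split_ifs with h
  · set x := 2 * (uh + δ) / (d2 * δ) with hxdef
    have hx0 : 0 ≤ x := div_nonneg (by linarith) (by positivity)
    set ts := Real.sqrt x with htsdef
    have hts0 : 0 ≤ ts := Real.sqrt_nonneg x
    have htssq : ts ^ 2 = x := Real.sq_sqrt hx0
    have hxle : x ≤ (d1 / d2) ^ 2 := by
      have h' : (uh + δ) * (2 * d2) ≤ δ * d1 ^ 2 :=
        (le_div_iff₀ (by positivity : (0:ℝ) < 2 * d2)).mp (by linarith)
      rw [hxdef, div_pow, div_le_div_iff₀ (by positivity) (by positivity)]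
      nlinarith [mul_le_mul_of_nonneg_right h' h2.le]
    have htsle : ts ≤ d1 / d2 := by
      rw [htsdef, show d1 / d2 = Real.sqrt ((d1/d2)^2) from (Real.sqrt_sq hq.le).symm]
      exact Real.sqrt_le_sqrt hxle
    unfold etabar
    split_ifs with hs hs'
    · linarith
    · have : δ * d2 / 2 * ts ^ 2 = uh + δ := by
        rw [htssq, hxdef]; field_simp
      linarith
    · push_neg at hs hs'
      have hts : ts = d1 / d2 := le_antisymm htsle hs'
      have hx : x = (d1/d2)^2 := by rw [← htssq, hts]
      have huh : uh = -δ + δ * d1 ^ 2 / (2 * d2) := by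
        have := hx
        rw [hxdef, div_pow] at this
        field_simp at this
        field_simp
        nlinarith
      rw [huh, hts]
      have e : δ*d1*(d1/d2) = 2*(δ*d1^2/(2*d2)) := by field_simp
      linarith
  · push_neg at h
    set ts := (uh + δ + δ * d1 ^ 2 / (2 * d2)) / (d1 * δ) with htsdef
    have hpos : 0 < δ * d1 ^ 2 / (2 * d2) := by positivity
    have hgt : d1 / d2 < ts := by
      rw [htsdef, lt_div_iff₀ (by positivity)]
      have e : d1 / d2 * (d1 * δ) = 2 * (δ * d1 ^ 2 / (2 * d2)) := by field_simp
      rw [e]; linarith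
    unfold etabar
    rw [if_neg (by linarith : ¬ ts ≤ 0), if_neg (by linarith : ¬ ts < d1/d2)]
    have : δ * d1 * ts = uh + δ + δ * d1 ^ 2 / (2 * d2) := by
      rw [htsdef]; field_simp
    linarith

end helpers

/-- Lemma 4.5 of Humphries–Magpantay: properties of the auxiliary
integral `I(ρ) = û e^{μρ} + σ ∫_{-ρ}^{0} e^{-μθ} η_{(k)}(θ) dθ` for `k = 2, 3`, whose
derivative is `I'(ρ) = e^{μρ}(μû + σ η_{(k)}(-ρ))`. -/
theorem stmt_11 (k : ℕ) (hk : k = 2 ∨ k = 3)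
    (μ σ c a δ uh : ℝ) (ha : 0 < a) (hc : c ≠ 0)
    (h1 : σ ≤ μ) (h2 : σ < -μ)
    (hδ0 : 0 < δ) (hδ1 : δ < |a / c|)
    (huh : uh ∈ Set.Icc (-δ) (-μ * δ / σ)) :
    -- "so that I'(ρ) = e^{μρ}[μ û + σ η_{(k)}(-ρ)]"
    (∀ ρ > (0 : ℝ),
      HasDerivAt
        (fun ρ => uh * Real.exp (μ * ρ) +
          σ * ∫ θ in (-ρ)..(0 : ℝ), Real.exp (-μ * θ) * etaK μ σ c δ uh k θ)
        (Real.exp (μ * ρ) * (μ * uh + σ * etaK μ σ c δ uh k (-ρ))) ρ) ∧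
    -- (A)
    (μ ≤ 0 → ∀ ρ > (0 : ℝ),
      0 < Real.exp (μ * ρ) * (μ * uh + σ * etaK μ σ c δ uh k (-ρ))) ∧
    -- (B)
    (0 < μ → ∀ ρ > (0 : ℝ), etaK μ σ c δ uh k (-ρ) ≤ 0 →
      0 < Real.exp (μ * ρ) * (μ * uh + σ * etaK μ σ c δ uh k (-ρ))) ∧
    -- (C)
    (∀ ρ > (0 : ℝ),
      Real.exp (μ * ρ) * (μ * uh + σ * etaK μ σ c δ uh k (-ρ)) ≤ 0 →
      0 < μ ∧ 0 < etaK μ σ c δ uh k (-ρ) ∧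
        uh * Real.exp (μ * ρ) +
          σ * (∫ θ in (-ρ)..(0 : ℝ), Real.exp (-μ * θ) * etaK μ σ c δ uh k θ) < δ) := by
  obtain ⟨huh1, huh2⟩ := huh
  have hσ : σ < 0 := by linarith
  have hμσ : μ + σ < 0 := by linarith
  have habs : 0 < |σ| := abs_pos.mpr hσ.ne
  have hsum : 0 < |μ| + |σ| := by linarith [abs_nonneg μ]
  have hd1 : 0 < D1 μ σ c δ := by
    have : (0:ℝ) ≤ (|μ| + |σ|) * |c| * δ := by positivity
    exact mul_pos hsum (by linarith)
  have hd2 : 0 < D2 μ σ c δ := by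
    have h1' : 0 < (D1 μ σ c δ) ^ 2 := pow_pos hd1 2
    have h2' : (0:ℝ) ≤ (|μ| + |σ|) ^ 3 * |c| * δ := by positivity
    have h3' : (0:ℝ) ≤ |σ * c| * δ := by positivity
    exact mul_pos (by linarith) (by linarith)
  have huhδ : uh < δ := by
    have : -μ * δ / σ < δ := by
      rw [div_lt_iff_of_neg hσ]
      nlinarith
    linarith
  set η := etaK μ σ c δ uh k with hηdef
  -- key properties of η
  have key : Continuous η ∧ Monotone η ∧ (∀ θ, θ < 0 → η θ ≤ uh) ∧
      (∀ θ, θ < 0 → η θ < uh ∨ η θ = -δ) := by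
    rcases hk with hk | hk <;> subst hk
    · have hev : ∀ θ : ℝ, η θ = max (uh + D1 μ σ c δ * δ * θ) (-δ) := fun _ => rfl
      have hD : 0 ≤ D1 μ σ c δ * δ := by positivity
      refine ⟨?_, ?_, ?_, ?_⟩
      · simp only [hηdef]
        show Continuous fun θ => max (uh + D1 μ σ c δ * δ * θ) (-δ)
        fun_prop
      · intro s t hst
        rw [hev, hev]
        exact max_le_max (by nlinarith [mul_le_mul_of_nonneg_left hst hD]) le_rfl
      · intro θ hθ
        rw [hev]
        have : D1 μ σ c δ * δ * θ < 0 := mul_neg_of_pos_of_neg (by positivity) hθ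
        exact max_le (by linarith) huh1
      · intro θ hθ
        rw [hev]
        have hlt : uh + D1 μ σ c δ * δ * θ < uh := by
          have : D1 μ σ c δ * δ * θ < 0 := mul_neg_of_pos_of_neg (by positivity) hθ
          linarith
        rcases le_or_gt (uh + D1 μ σ c δ * δ * θ) (-δ) with h | h
        · exact Or.inr (max_eq_right h)
        · exact Or.inl (by rw [max_eq_left h.le]; exact hlt)
    · set ts := thetaShift δ (D1 μ σ c δ) (D2 μ σ c δ) uh with htsdef
      have hev : ∀ θ : ℝ, η θ = etabar δ (D1 μ σ c δ) (D2 μ σ c δ) (θ + ts) := fun _ => rfl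
      have hts_le : etabar δ (D1 μ σ c δ) (D2 μ σ c δ) ts ≤ uh :=
        etabar_thetaShift_le hδ0 hd1 hd2 huh1
      refine ⟨?_, ?_, ?_, ?_⟩
      · simp only [hηdef]
        exact (etabar_cont hδ0 hd1 hd2).comp (continuous_id.add continuous_const)
      · intro s t hst
        rw [hev, hev]
        exact etabar_mono hδ0 hd1 hd2 (by linarith)
      · intro θ hθ
        rw [hev]
        calc etabar δ (D1 μ σ c δ) (D2 μ σ c δ) (θ + ts)
            ≤ etabar δ (D1 μ σ c δ) (D2 μ σ c δ) ts :=
              etabar_mono hδ0 hd1 hd2 (by linarith)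
          _ ≤ uh := hts_le
      · intro θ hθ
        rw [hev]
        by_cases he : etabar δ (D1 μ σ c δ) (D2 μ σ c δ) (θ + ts) = -δ
        · exact Or.inr he
        · left
          have hpos : 0 < θ + ts := by
            by_contra h
            push_neg at h
            exact he (etabar_of_nonpos h)
          calc etabar δ (D1 μ σ c δ) (D2 μ σ c δ) (θ + ts)
              < etabar δ (D1 μ σ c δ) (D2 μ σ c δ) ts :=
                etabar_strict hδ0 hd1 hd2 hpos (by linarith)
            _ ≤ uh := hts_le
  obtain ⟨hcont, hmono, hle, halt⟩ := key
  -- basic positivity claim used in (A) and (B)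
  have hP1 : uh ≤ 0 → ∀ ρ > (0:ℝ), 0 < μ * uh + σ * η (-ρ) := by
    intro hu0 ρ hρ
    have hρ' : -ρ < 0 := by linarith
    have he_le : η (-ρ) ≤ uh := hle (-ρ) hρ'
    rcases lt_or_eq_of_le hu0 with hu | hu
    · have hσe : σ * uh ≤ σ * η (-ρ) := mul_le_mul_of_nonpos_left he_le hσ.le
      nlinarith [mul_pos (show (0:ℝ) < -(μ + σ) by linarith) (show (0:ℝ) < -uh by linarith)]
    · have hneg : η (-ρ) < 0 := by
        rcases halt (-ρ) hρ' with h | h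
        · rw [hu] at h; exact h
        · rw [h]; linarith
      have : 0 < σ * η (-ρ) := mul_pos_of_neg_of_neg hσ hneg
      rw [hu]
      linarith
  have hA : μ ≤ 0 → ∀ ρ > (0:ℝ),
      0 < Real.exp (μ * ρ) * (μ * uh + σ * η (-ρ)) := by
    intro hμ ρ hρ
    have hu0 : uh ≤ 0 := by
      have hnum : 0 ≤ -μ * δ := by nlinarith
      have : -μ * δ / σ ≤ 0 := div_nonpos_iff.mpr (Or.inl ⟨hnum, hσ.le⟩)
      linarith
    exact mul_pos (Real.exp_pos _) (hP1 hu0 ρ hρ)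
  have hB : 0 < μ → ∀ ρ > (0:ℝ), η (-ρ) ≤ 0 →
      0 < Real.exp (μ * ρ) * (μ * uh + σ * η (-ρ)) := by
    intro hμ ρ hρ he0
    apply mul_pos (Real.exp_pos _)
    rcases le_or_gt uh 0 with hu | hu
    · exact hP1 hu ρ hρ
    · have h1' : 0 < μ * uh := mul_pos hμ hu
      have h2' : 0 ≤ σ * η (-ρ) := by
        nlinarith [mul_nonneg (neg_nonneg.mpr hσ.le) (neg_nonneg.mpr he0)]
      linarith
  -- the derivative
  have hgcont : Continuous (fun θ => Real.exp (-μ * θ) * η θ) := by fun_prop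
  have hDer : ∀ ρ > (0:ℝ),
      HasDerivAt
        (fun ρ => uh * Real.exp (μ * ρ) +
          σ * ∫ θ in (-ρ)..(0 : ℝ), Real.exp (-μ * θ) * η θ)
        (Real.exp (μ * ρ) * (μ * uh + σ * η (-ρ))) ρ := by
    intro ρ hρ
    set g : ℝ → ℝ := fun θ => Real.exp (-μ * θ) * η θ with hgdef
    have hInt : IntervalIntegrable g MeasureTheory.volume 0 (-ρ) :=
      hgcont.intervalIntegrable 0 (-ρ)
    have hd : HasDerivAt (fun x => ∫ t in (0:ℝ)..x, g t) (g (-ρ)) (-ρ) :=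
      intervalIntegral.integral_hasDerivAt_right hInt
        (hgcont.stronglyMeasurableAtFilter _ _) hgcont.continuousAt
    have hneg : HasDerivAt (fun ρ : ℝ => -ρ) (-1) ρ := (hasDerivAt_id ρ).neg
    have hcomp : HasDerivAt (fun ρ : ℝ => ∫ t in (0:ℝ)..(-ρ), g t) (g (-ρ) * (-1)) ρ :=
      HasDerivAt.comp ρ hd hneg
    have h1' : HasDerivAt (fun x : ℝ => uh * Real.exp (μ * x))
        (uh * (Real.exp (μ * ρ) * μ)) ρ := by
      have h := (((hasDerivAt_id ρ).const_mul μ).exp).const_mul uh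
      simpa using h
    have h2' : HasDerivAt (fun ρ : ℝ => σ * ∫ t in (-ρ)..(0:ℝ), g t)
        (σ * -(g (-ρ) * (-1))) ρ := by
      have heq : (fun ρ : ℝ => σ * ∫ t in (-ρ)..(0:ℝ), g t)
          = fun ρ : ℝ => σ * -(∫ t in (0:ℝ)..(-ρ), g t) := by
        funext x
        rw [intervalIntegral.integral_symm]
      rw [heq]
      exact hcomp.neg.const_mul σ
    have := h1'.add h2'
    refine this.congr_deriv ?_
    have hexp : Real.exp (-μ * -ρ) = Real.exp (μ * ρ) := by ring_nf
    simp only [hgdef, hexp]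
    ring
  refine ⟨hDer, hA, hB, ?_⟩
  intro ρ hρ hle0
  have hμ : 0 < μ := by
    by_contra h
    push_neg at h
    linarith [hA h ρ hρ]
  have hepos : 0 < η (-ρ) := by
    by_contra h
    push_neg at h
    linarith [hB hμ ρ hρ h]
  refine ⟨hμ, hepos, ?_⟩
  have hsum0 : μ * uh + σ * η (-ρ) ≤ 0 := by
    nlinarith [Real.exp_pos (μ * ρ)]
  -- pointwise bound and integral comparison
  set g : ℝ → ℝ := fun θ => Real.exp (-μ * θ) * η θ with hgdef
  have hptwise : ∀ θ ∈ Set.Icc (-ρ) (0:ℝ),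
      σ * g θ ≤ -(μ * uh) * Real.exp (-μ * θ) := by
    intro θ hθ
    have hm : η (-ρ) ≤ η θ := hmono hθ.1
    have hσe : σ * η θ ≤ σ * η (-ρ) := mul_le_mul_of_nonpos_left hm hσ.le
    have hb : σ * η θ ≤ -(μ * uh) := by linarith
    have := mul_le_mul_of_nonneg_right hb (Real.exp_pos (-μ * θ)).le
    calc σ * g θ = σ * η θ * Real.exp (-μ * θ) := by simp only [hgdef]; ring
      _ ≤ -(μ * uh) * Real.exp (-μ * θ) := this
  have hint1 : IntervalIntegrable (fun θ => σ * g θ) MeasureTheory.volume (-ρ) 0 :=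
    (continuous_const.mul hgcont).intervalIntegrable _ _
  have hint2 : IntervalIntegrable (fun θ => -(μ * uh) * Real.exp (-μ * θ))
      MeasureTheory.volume (-ρ) 0 := (by fun_prop : Continuous _).intervalIntegrable _ _
  have hcomp : (∫ θ in (-ρ)..(0:ℝ), σ * g θ)
      ≤ ∫ θ in (-ρ)..(0:ℝ), -(μ * uh) * Real.exp (-μ * θ) :=
    intervalIntegral.integral_mono_on (by linarith) hint1 hint2 hptwise
  -- compute the right integral
  have hF : ∀ θ ∈ Set.uIcc (-ρ) (0:ℝ),
      HasDerivAt (fun t => uh * Real.exp (-μ * t)) (-(μ * uh) * Real.exp (-μ * θ)) θ := by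
    intro θ _
    have h := (((hasDerivAt_id θ).const_mul (-μ)).exp).const_mul uh
    simp only [id_eq, mul_one] at h
    have e : uh * (Real.exp (-μ * θ) * -μ) = -(μ * uh) * Real.exp (-μ * θ) := by ring
    rw [e] at h
    exact h
  have hval : (∫ θ in (-ρ)..(0:ℝ), -(μ * uh) * Real.exp (-μ * θ))
      = uh - uh * Real.exp (μ * ρ) := by
    rw [intervalIntegral.integral_eq_sub_of_hasDerivAt hF
      ((by fun_prop : Continuous fun θ => -(μ * uh) * Real.exp (-μ * θ)).intervalIntegrable _ _)]
    have : -μ * -ρ = μ * ρ := by ring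
    simp [this]
  have hconst : (∫ θ in (-ρ)..(0:ℝ), σ * g θ) = σ * ∫ θ in (-ρ)..(0:ℝ), g θ :=
    intervalIntegral.integral_const_mul σ g
  have : σ * (∫ θ in (-ρ)..(0:ℝ), g θ) ≤ uh - uh * Real.exp (μ * ρ) := by
    rw [← hconst]; rw [hval] at hcomp; exact hcomp
  calc uh * Real.exp (μ * ρ) + σ * (∫ θ in (-ρ)..(0:ℝ), Real.exp (-μ * θ) * η θ)
      ≤ uh * Real.exp (μ * ρ) + (uh - uh * Real.exp (μ * ρ)) := by
        have hg : (fun θ => Real.exp (-μ * θ) * η θ) = g := rfl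
        rw [hg]; linarith
    _ = uh := by ring
    _ < δ := huhδ
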